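/- Let r ≥ 1, s = (s_1,…,s_r) a tuple of natural numbers, and u = (u_1,…,u_r) ∈ K_∞^r with |u_j|_∞ < q^{s_j} for every j. Then the family indexed by the set of strictly decreasing tuples of positive integers i_1 > i_2 > ⋯ > i_r > 0, with term ∏_{j=1}^r u_j^{q^{i_j}} / (θ^{q^{i_j}} − θ)^{s_j}, is summable in K_∞. (That is, the s-th Kochubei multiple polylogarithm converges on the open polydisc 𝔻'_s.) -/

import Mathlib

set_option linter.unnecessarySeqFocus false


open FunctionField
open scoped Multiplicative

/-- The canonical ring homomorphism from `K = 𝔽_q(θ)` into its completion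
`K_∞ = 𝔽_q((1/θ))` at the infinite place. -/
noncomputable def ratFuncToFqtInfty (Fq : Type*) [Field Fq] [DecidableEq (RatFunc Fq)] :
    RatFunc Fq →+* RatFunc.CompletionAtInfty Fq :=
  letI := RatFunc.inftyValued Fq
  UniformSpace.Completion.coeRingHom

/-- A ring with a valuation-induced topology is a nonarchimedean additive group. -/
theorem valued_nonarchimedeanAddGroup {R : Type*} [Ring R] {Γ₀ : Type*}
    [LinearOrderedCommGroupWithZero Γ₀] [hv : Valued R Γ₀] : NonarchimedeanAddGroup R where
  is_nonarchimedean := by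
    intro U hU
    obtain ⟨γ, hγ⟩ := Valued.mem_nhds_zero.mp hU
    refine ⟨⟨hv.v.restrict.ltAddSubgroup γ, ?_⟩, hγ⟩
    rw [isOpen_iff_mem_nhds]
    intro x hx
    rw [Valued.mem_nhds]
    refine ⟨γ, fun y hy => ?_⟩
    have hx' : hv.v.restrict x < γ := hx
    calc hv.v.restrict y = hv.v.restrict (y - x + x) := by rw [sub_add_cancel]
      _ ≤ max (hv.v.restrict (y - x)) (hv.v.restrict x) := hv.v.restrict.map_add _ _
      _ < γ := max_lt hy hx'

theorem fqtInfty_completeSpace (Fq : Type*) [Field Fq] [Fintype Fq]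
    [DecidableEq (RatFunc Fq)] : CompleteSpace (RatFunc.CompletionAtInfty Fq) :=
  letI := RatFunc.inftyValued Fq
  UniformSpace.Completion.completeSpace (RatFunc Fq)

theorem fqtInfty_v_coe (Fq : Type*) [Field Fq] [Fintype Fq] [DecidableEq (RatFunc Fq)]
    (x : RatFunc Fq) :
    Valued.v (ratFuncToFqtInfty Fq x) = RatFunc.inftyValuationDef Fq x := by
  letI := RatFunc.inftyValued Fq
  exact Valued.valuedCompletion_apply x

/-- For `s = (s_1, …, s_r)` and `u = (u_1, …, u_r) ∈ K_∞^r` with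
`|u_j|_∞ < q^{s_j}` for all `j`, the family of terms
`∏_j u_j^{q^{i_j}} / (θ^{q^{i_j}} - θ)^{s_j}` indexed by the strictly decreasing tuples
`i_1 > i_2 > ⋯ > i_r > 0` is summable in `K_∞`; i.e. the `s`-th Kochubei multiple
polylogarithm converges on the open polydisc `𝔻'_s`. -/
theorem kmpl_summable (Fq : Type*) [Field Fq] [Fintype Fq] [DecidableEq (RatFunc Fq)]
    (q : ℕ) (hq : Fintype.card Fq = q) (r : ℕ) (hr : 1 ≤ r) (s : Fin r → ℕ)
    (u : Fin r → RatFunc.CompletionAtInfty Fq)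
    (hu : ∀ j, Valued.v (u j) < (↑(Multiplicative.ofAdd ((s j : ℕ) : ℤ)) : WithZero (Multiplicative ℤ))) :
    Summable (fun i : {i : Fin r → ℕ // StrictAnti i ∧ ∀ j, 0 < i j} =>
      ∏ j, u j ^ q ^ (i.1 j) /
        (ratFuncToFqtInfty Fq RatFunc.X ^ q ^ (i.1 j) - ratFuncToFqtInfty Fq RatFunc.X)
          ^ s j) := by
  classical
  haveI := valued_nonarchimedeanAddGroup (R := RatFunc.CompletionAtInfty Fq) (Γ₀ := WithZero (Multiplicative ℤ))
  haveI := fqtInfty_completeSpace Fq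
  have hq2 : 2 ≤ q := hq ▸ Fintype.one_lt_card
  set T : RatFunc.CompletionAtInfty Fq := ratFuncToFqtInfty Fq RatFunc.X with hT
  -- valuation of the denominators
  have hD : ∀ n : ℕ, 2 ≤ n →
      Valued.v (T ^ n - T) = (↑(Multiplicative.ofAdd (n : ℤ)) : WithZero (Multiplicative ℤ)) := by
    intro n hn
    have hdeg : (Polynomial.X ^ n - Polynomial.X : Polynomial Fq).natDegree = n := by
      rw [Polynomial.natDegree_sub_eq_left_of_natDegree_lt] <;>
        simp [Polynomial.natDegree_X_pow, Polynomial.natDegree_X] <;> omega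
    have hpne : (Polynomial.X ^ n - Polynomial.X : Polynomial Fq) ≠ 0 := by
      intro h
      rw [h, Polynomial.natDegree_zero] at hdeg
      omega
    have hmap : T ^ n - T = ratFuncToFqtInfty Fq
        (algebraMap (Polynomial Fq) (RatFunc Fq) (Polynomial.X ^ n - Polynomial.X)) := by
      rw [map_sub, map_pow, RatFunc.algebraMap_X, map_sub, map_pow]
    rw [hmap, fqtInfty_v_coe, RatFunc.inftyValuation.polynomial Fq hpne, hdeg]
    rfl
  by_cases hz : ∃ j, u j = 0
  · obtain ⟨j0, hj0⟩ := hz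
    have : (fun i : {i : Fin r → ℕ // StrictAnti i ∧ ∀ j, 0 < i j} =>
        ∏ j, u j ^ q ^ (i.1 j) / (T ^ q ^ (i.1 j) - T) ^ s j) = fun _ => 0 := by
      funext i
      apply Finset.prod_eq_zero (Finset.mem_univ j0)
      rw [hj0, zero_pow (by positivity), zero_div]
    rw [this]
    exact summable_zero
  push_neg at hz
  -- extract integer valuations of the `u j`
  have hne : ∀ j, Valued.v (u j) ≠ 0 := fun j => by
    simpa using (Valuation.ne_zero_iff Valued.v).mpr (hz j)
  choose c hc using fun j => WithZero.ne_zero_iff_exists.mp (hne j)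
  set a : Fin r → ℤ := fun j => Multiplicative.toAdd (c j) with ha
  have hva : ∀ j, Valued.v (u j) = (↑(Multiplicative.ofAdd (a j)) : WithZero (Multiplicative ℤ)) := by
    intro j
    rw [ha]
    simp only [ofAdd_toAdd]
    exact (hc j).symm
  have haslt : ∀ j, a j < s j := by
    intro j
    have := hu j
    rw [hva j, WithZero.coe_lt_coe, Multiplicative.ofAdd_lt] at this
    exact this
  -- per-factor valuation
  have hfac : ∀ (j : Fin r) (n : ℕ), 1 ≤ n →
      Valued.v (u j ^ q ^ n / (T ^ q ^ n - T) ^ s j)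
        = (↑(Multiplicative.ofAdd ((q : ℤ) ^ n * a j - (s j : ℤ) * (q : ℤ) ^ n)) : WithZero (Multiplicative ℤ)) := by
    intro j n hn
    have h2 : 2 ≤ q ^ n := le_trans hq2 (Nat.le_self_pow (by omega) q)
    rw [map_div₀, map_pow, map_pow, hva j, hD _ h2, ← WithZero.coe_pow, ← WithZero.coe_pow,
      ← WithZero.coe_div, WithZero.coe_inj]
    rw [← ofAdd_nsmul, ← ofAdd_nsmul, ← ofAdd_sub]
    congr 1
  set f : {i : Fin r → ℕ // StrictAnti i ∧ ∀ j, 0 < i j} → RatFunc.CompletionAtInfty Fq :=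
    fun i => ∏ j, u j ^ q ^ (i.1 j) / (T ^ q ^ (i.1 j) - T) ^ s j with hf
  set E : {i : Fin r → ℕ // StrictAnti i ∧ ∀ j, 0 < i j} → ℤ :=
    fun i => ∑ j, ((q : ℤ) ^ (i.1 j) * a j - (s j : ℤ) * (q : ℤ) ^ (i.1 j)) with hE
  have hvf : ∀ i, Valued.v (f i) = (↑(Multiplicative.ofAdd (E i)) : WithZero (Multiplicative ℤ)) := by
    intro i
    rw [hf]
    simp only
    rw [map_prod]
    rw [Finset.prod_congr rfl fun j _ => hfac j (i.1 j) (i.2.2 j)]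
    rw [hE]
    simp only
    rw [ofAdd_sum]
    norm_cast
    exact (map_prod (WithZero.coeMonoidHom : Multiplicative ℤ →* WithZero (Multiplicative ℤ)) _ Finset.univ).symm
  let j0 : Fin r := ⟨0, hr⟩
  have hEbound : ∀ i, E i ≤ -((i.1 j0 : ℤ) + 1) := by
    intro i
    have hterm : ∀ j : Fin r,
        (q : ℤ) ^ (i.1 j) * a j - (s j : ℤ) * (q : ℤ) ^ (i.1 j) ≤
          (if j = j0 then -((i.1 j0 : ℤ) + 1) else 0) := by
      intro j
      have hpow_pos : (0 : ℤ) < (q : ℤ) ^ (i.1 j) := by positivity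
      have hdiff : a j - (s j : ℤ) ≤ -1 := by
        have := haslt j; omega
      have hmain : (q : ℤ) ^ (i.1 j) * a j - (s j : ℤ) * (q : ℤ) ^ (i.1 j)
          ≤ -(q : ℤ) ^ (i.1 j) := by
        have : (q : ℤ) ^ (i.1 j) * (a j - (s j : ℤ)) ≤ (q : ℤ) ^ (i.1 j) * (-1) :=
          mul_le_mul_of_nonneg_left hdiff (le_of_lt hpow_pos)
        nlinarith
      have hlt : (i.1 j : ℤ) < (q : ℤ) ^ (i.1 j) := by
        exact_mod_cast Nat.lt_pow_self (n := i.1 j) hq2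
      by_cases hj : j = j0
      · rw [if_pos hj, ← hj]
        omega
      · rw [if_neg hj]
        omega
    calc E i ≤ ∑ j, (if j = j0 then -((i.1 j0 : ℤ) + 1) else 0) :=
          Finset.sum_le_sum fun j _ => hterm j
      _ = -((i.1 j0 : ℤ) + 1) := by simp
  -- summability via vanishing at cofinite
  apply NonarchimedeanAddGroup.summable_of_tendsto_cofinite_zero
  rw [(Valued.hasBasis_nhds_zero (RatFunc.CompletionAtInfty Fq) (WithZero (Multiplicative ℤ))).tendsto_right_iff]
  intro γ₀ _
  rw [Filter.eventually_cofinite]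
  simp only [Valuation.restrict_lt_iff_lt_embedding]
  obtain ⟨γ, hγ⟩ : ∃ γ : (WithZero (Multiplicative ℤ))ˣ, (γ : WithZero (Multiplicative ℤ)) =
      MonoidWithZeroHom.ValueGroup₀.embedding γ₀.1 := ⟨Units.mk0 _ (by simp), rfl⟩
  rw [← hγ]
  have hγne : (γ : WithZero (Multiplicative ℤ)) ≠ 0 := γ.ne_zero
  obtain ⟨g, hg⟩ := WithZero.ne_zero_iff_exists.mp hγne
  set N : ℕ := (-(Multiplicative.toAdd g)).toNat with hN
  have hsub : {i : {i : Fin r → ℕ // StrictAnti i ∧ ∀ j, 0 < i j} |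
      ¬ Valued.v (f i) < (γ : WithZero (Multiplicative ℤ))} ⊆
      Subtype.val ⁻¹' (Set.univ.pi fun _ : Fin r => Set.Iic N) := by
    intro i hi
    simp only [Set.mem_setOf_eq, not_lt] at hi
    have hvi := hvf i
    have hle : (γ : WithZero (Multiplicative ℤ)) ≤ (↑(Multiplicative.ofAdd (E i)) : WithZero (Multiplicative ℤ)) := by
      rw [← hvi]; exact hi
    rw [← hg, WithZero.coe_le_coe] at hle
    have hle' : Multiplicative.toAdd g ≤ E i := Multiplicative.toAdd_le.mpr hle
    have hb := hEbound i
    have hi0 : (i.1 j0 : ℤ) ≤ -(Multiplicative.toAdd g) - 1 := by omega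
    intro j _
    simp only [Set.mem_Iic]
    have hmono : i.1 j ≤ i.1 j0 := by
      rcases eq_or_ne j j0 with h | h
      · rw [h]
      · have : j0 < j := by
          rw [Fin.lt_def]
          have : j.1 ≠ 0 := fun h0 => h (Fin.ext h0)
          exact Nat.pos_of_ne_zero this
        exact le_of_lt (i.2.1 this)
    have : (i.1 j0 : ℤ) ≤ (N : ℤ) := by
      rw [hN]; omega
    omega
  exact Set.Finite.subset
    (Set.Finite.preimage (Set.injOn_of_injective Subtype.val_injective)
      (Set.Finite.pi fun _ => Set.finite_Iic N)) hsub
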